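/- Under hereditary constraints, GDA run with the restricted feasibility f' (where f'(ν) = 0 iff ν ∈ {0} ∪ {χ_i : f(χ_i) = 0}) outputs a matching that is feasible with respect to the original constraint f and satisfies the no empty matching property: if there exists an acceptable contract (s,c) with f(χ_{index(c)}) = 0, then the resulting HM-stable (with respect to f') matching is nonempty. -/

import Mathlib

/-- The `i`-th unit vector. -/
def chiF {m : ℕ} (i : Fin m) : Fin m → ℕ := fun k => if k = i then 1 else 0

/-- Occupancy vector of a finite set of contracts. -/
def nuF {S : Type*} {m : ℕ} [DecidableEq S] (Z : Finset (S × Fin m)) : Fin m → ℕ :=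
  fun c => (Z.filter (fun x => x.2 = c)).card

/-- The restricted feasibility `f'`: `f'(ν) = 0` iff `ν ∈ {0} ∪ {χ_i : f(χ_i) = 0}`. -/
def FPrime {m : ℕ} (f : (Fin m → ℕ) → Prop) (ν : Fin m → ℕ) : Prop :=
  ν = 0 ∨ ∃ i : Fin m, f (chiF i) ∧ ν = chiF i

-- The students' choice function.
open scoped Classical in
noncomputable def ChS {S C : Type*} (sAcc : S → C → Prop) (spref : S → C → C → Prop)
    (Z : Finset (S × C)) : Finset (S × C) :=
  Z.filter (fun x => sAcc x.1 x.2 ∧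
    ∀ x' ∈ Z, x'.1 = x.1 → sAcc x.1 x'.2 → x' ≠ x → spref x.1 x.2 x'.2)

/-- Under a hereditary constraint `f`, GDA run with the restricted feasibility
`f'` outputs a matching feasible for `f`, and if some acceptable contract
`(s,c)` has `f(χ_c) = 0`, the resulting HM-stable (w.r.t. `f'`) matching is
nonempty (no empty matching property). -/
theorem stmt10 {S : Type*} {m : ℕ} [DecidableEq S]
    (X : Finset (S × Fin m))
    (sAcc : S → Fin m → Prop) (spref : S → Fin m → Fin m → Prop)
    (w : S × Fin m → ℝ) (hwpos : ∀ x, 0 < w x)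
    (f : (Fin m → ℕ) → Prop)
    (hH : f 0 ∧ ∀ ν ν' : Fin m → ℕ, ν' ≤ ν → f ν → f ν')
    (ChC : Finset (S × Fin m) → Finset (S × Fin m))
    (hChC : ∀ Z, ChC Z ⊆ Z ∧ FPrime f (nuF (ChC Z)) ∧
      ∀ Z' ⊆ Z, FPrime f (nuF Z') → Z' ≠ ChC Z → ∑ x ∈ Z', w x < ∑ x ∈ ChC Z, w x)
    (Y : Finset (S × Fin m)) (hYX : Y ⊆ X)
    -- HM-stability of Y with respect to f'
    (hYS : Y = ChS sAcc spref Y) (hYC : Y = ChC Y)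
    (hstab : ∀ x ∈ X, x ∉ Y →
      ¬ (x ∈ ChS sAcc spref (insert x Y) ∧ x ∈ ChC (insert x Y))) :
    f (nuF Y) ∧ ∀ x ∈ X, sAcc x.1 x.2 → f (chiF x.2) → Y ≠ ∅ := by
  have hnu : ∀ x : S × Fin m, nuF {x} = chiF x.2 := by
    intro x
    funext c
    simp only [nuF, chiF, Finset.filter_singleton]
    by_cases h : x.2 = c
    · subst h; simp
    · rw [if_neg (fun h' : c = x.2 => h h'.symm)]; simp [h]
  constructor
  · have h := (hChC Y).2.1
    rw [← hYC] at h
    rcases h with h0 | ⟨i, hfi, hchi⟩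
    · rw [h0]; exact hH.1
    · rw [hchi]; exact hfi
  · rintro x hxX hacc hfchi rfl
    apply hstab x hxX (by simp)
    constructor
    · simp only [ChS, insert_empty_eq, Finset.mem_filter]
      refine ⟨by simp, hacc, ?_⟩
      intro x' hx' _ _ hne
      simp only [Finset.mem_singleton] at hx'
      exact absurd hx' hne
    · -- show ChC {x} = {x}
      have h := hChC {x}
      by_contra hx
      have hsub : ChC {x} ⊆ {x} := h.1
      have hne : ({x} : Finset (S × Fin m)) ≠ ChC {x} := by
        intro heq; apply hx; rw [insert_empty_eq, ← heq]; simp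
      have hfeas : FPrime f (nuF ({x} : Finset (S × Fin m))) := by
        right; exact ⟨x.2, hfchi, hnu x⟩
      have hlt := h.2.2 {x} (by simp) hfeas hne
      have hCempty : ChC {x} = ∅ := by
        rcases Finset.subset_singleton_iff.mp hsub with h' | h'
        · exact h'
        · exact absurd h'.symm hne
      rw [hCempty] at hlt
      simp at hlt
      exact absurd hlt (not_lt.mpr (le_of_lt (hwpos x)))
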